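/- arXiv:gr-qc/0209052 — 2 statements merged into one kernel-verified Lean document; each statement's English description precedes it below -/
import Mathlib

section
/- Let U, V > 0 and let θ, ζ, λ, ν, r : [0,U] × [0,V] → ℝ be continuous, with r(u,v) > 0, λ(u,v) ≤ 0, and ν(u,v) ≤ 0 everywhere. Suppose that for each fixed v the function u ↦ θ(u,v) is differentiable with ∂_u θ(u,v) = −ζ(u,v) λ(u,v) / r(u,v), and for each fixed u the function v ↦ ζ(u,v) is differentiable with ∂_v ζ(u,v) = −θ(u,v) ν(u,v) / r(u,v). If θ(0,v) ≥ 0 for all v ∈ [0,V] and ζ(u,0) ≥ 0 for all u ∈ [0,U], then θ(u,v) ≥ 0 and ζ(u,v) ≥ 0 for all (u,v) ∈ [0,U] × [0,V]; consequently ∂_u θ(u,v) ≥ 0 and ∂_v ζ(u,v) ≥ 0 everywhere, i.e. θ is non-decreasing in u and ζ is non-decreasing in v. -/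
open Set Real Filter

set_option maxHeartbeats 1000000

lemma bootstrap (U V M : ℝ) (hU : 0 < U) (hV : 0 < V) (hM : 0 ≤ M)
    (θ ζ a b : ℝ → ℝ → ℝ)
    (hθc : ContinuousOn (fun p : ℝ × ℝ => θ p.1 p.2) (Icc 0 U ×ˢ Icc 0 V))
    (hζc : ContinuousOn (fun p : ℝ × ℝ => ζ p.1 p.2) (Icc 0 U ×ˢ Icc 0 V))
    (ha : ∀ u ∈ Icc (0:ℝ) U, ∀ v ∈ Icc (0:ℝ) V, a u v ∈ Icc 0 M)
    (hb : ∀ u ∈ Icc (0:ℝ) U, ∀ v ∈ Icc (0:ℝ) V, b u v ∈ Icc 0 M)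
    (hθu : ∀ u ∈ Icc (0:ℝ) U, ∀ v ∈ Icc (0:ℝ) V,
      HasDerivWithinAt (fun u' => θ u' v) (ζ u v * a u v) (Icc 0 U) u)
    (hζv : ∀ u ∈ Icc (0:ℝ) U, ∀ v ∈ Icc (0:ℝ) V,
      HasDerivWithinAt (fun v' => ζ u v') (θ u v * b u v) (Icc 0 V) v)
    (hθ0 : ∀ v ∈ Icc (0:ℝ) V, 0 ≤ θ 0 v)
    (hζ0 : ∀ u ∈ Icc (0:ℝ) U, 0 ≤ ζ u 0) :
    ∀ u ∈ Icc (0:ℝ) U, ∀ v ∈ Icc (0:ℝ) V, 0 ≤ θ u v ∧ 0 ≤ ζ u v := by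
  have main : ∀ ε : ℝ, 0 < ε → ∀ u ∈ Icc (0:ℝ) U, ∀ v ∈ Icc (0:ℝ) V,
      0 ≤ θ u v + ε * Real.exp ((M+1)*(u+v)) ∧
      0 ≤ ζ u v + ε * Real.exp ((M+1)*(u+v)) := by
    intro ε hε
    have hEd : ∀ (K v ε : ℝ), ∀ x : ℝ,
        HasDerivAt (fun x => ε * Real.exp (K*(x+v))) (ε * (Real.exp (K*(x+v)) * (K*1))) x := by
      intro K v ε x
      have h1 : HasDerivAt (fun x : ℝ => K*(x+v)) (K*1) x :=
        ((hasDerivAt_id x).add_const v).const_mul K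
      exact h1.exp.const_mul ε
    have hEd' : ∀ (K u ε : ℝ), ∀ y : ℝ,
        HasDerivAt (fun y => ε * Real.exp (K*(u+y))) (ε * (Real.exp (K*(u+y)) * (K*1))) y := by
      intro K u ε y
      have h1 : HasDerivAt (fun y : ℝ => K*(u+y)) (K*1) y :=
        ((hasDerivAt_id y).const_add u).const_mul K
      exact h1.exp.const_mul ε
    -- the set of good times
    set S : Set ℝ := {t : ℝ | 0 ≤ t ∧ t ≤ U + V ∧
      ∀ u ∈ Icc (0:ℝ) U, ∀ v ∈ Icc (0:ℝ) V, u + v ≤ t →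
        0 ≤ θ u v + ε * Real.exp ((M+1)*(u+v)) ∧
        0 ≤ ζ u v + ε * Real.exp ((M+1)*(u+v))} with hSdef
    have hS0 : (0:ℝ) ∈ S := by
      refine ⟨le_rfl, by linarith, ?_⟩
      intro u hu v hv hsum
      have hu0 : u = 0 := le_antisymm (by linarith [hv.1]) hu.1
      have hv0 : v = 0 := le_antisymm (by linarith [hu.1]) hv.1
      subst hu0; subst hv0
      constructor
      · have := hθ0 0 ⟨le_rfl, hV.le⟩; positivity
      · have := hζ0 0 ⟨le_rfl, hU.le⟩; positivity
    have hSne : S.Nonempty := ⟨0, hS0⟩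
    have hSbdd : BddAbove S := ⟨U + V, fun t ht => ht.2.1⟩
    set T := sSup S with hTdef
    have hT0 : 0 ≤ T := le_csSup hSbdd hS0
    have hTle : T ≤ U + V := csSup_le hSne (fun t ht => ht.2.1)
    -- P holds at T (by a scaling limit)
    have hPT : ∀ u ∈ Icc (0:ℝ) U, ∀ v ∈ Icc (0:ℝ) V, u + v ≤ T →
        0 ≤ θ u v + ε * Real.exp ((M+1)*(u+v)) ∧
        0 ≤ ζ u v + ε * Real.exp ((M+1)*(u+v)) := by
      intro u hu v hv hsum
      have key : ∀ s ∈ Ico (0:ℝ) 1,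
          0 ≤ θ (s*u) (s*v) + ε * Real.exp ((M+1)*(s*u+s*v)) ∧
          0 ≤ ζ (s*u) (s*v) + ε * Real.exp ((M+1)*(s*u+s*v)) := by
        intro s hs
        have hsu : s*u ∈ Icc (0:ℝ) U :=
          ⟨mul_nonneg hs.1 hu.1, le_trans (mul_le_of_le_one_left hu.1 hs.2.le) hu.2⟩
        have hsv : s*v ∈ Icc (0:ℝ) V :=
          ⟨mul_nonneg hs.1 hv.1, le_trans (mul_le_of_le_one_left hv.1 hs.2.le) hv.2⟩
        by_cases hc : u + v ≤ 0
        · have hu0 : u = 0 := le_antisymm (by linarith [hv.1]) hu.1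
          have hv0 : v = 0 := le_antisymm (by linarith [hu.1]) hv.1
          have := hS0.2.2 (s*u) hsu (s*v) hsv (by rw [hu0, hv0]; ring_nf; rfl)
          exact this
        · push_neg at hc
          have hlt : s*(u+v) < T :=
            lt_of_lt_of_le (by nlinarith [hs.2]) hsum
          obtain ⟨t, htS, hlt2⟩ := exists_lt_of_lt_csSup hSne hlt
          exact htS.2.2 (s*u) hsu (s*v) hsv (by rw [← mul_add]; linarith)
      have hmem : ((u, v) : ℝ × ℝ) ∈ Icc (0:ℝ) U ×ˢ Icc (0:ℝ) V := ⟨hu, hv⟩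
      have hpath : Tendsto (fun s : ℝ => ((s*u, s*v) : ℝ × ℝ)) (nhdsWithin 1 (Iio 1))
          (nhdsWithin (u, v) (Icc (0:ℝ) U ×ˢ Icc (0:ℝ) V)) := by
        apply tendsto_nhdsWithin_of_tendsto_nhds_of_eventually_within
        · have hcont : Continuous fun s : ℝ => ((s*u, s*v) : ℝ × ℝ) := by continuity
          have := (hcont.tendsto 1).mono_left (nhdsWithin_le_nhds (s := Iio (1:ℝ)))
          simpa using this
        · filter_upwards [Ioo_mem_nhdsLT_of_mem (show (1:ℝ) ∈ Ioc (0:ℝ) 1 by constructor <;> norm_num)]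
            with s hs
          exact ⟨⟨mul_nonneg hs.1.le hu.1, le_trans (mul_le_of_le_one_left hu.1 hs.2.le) hu.2⟩,
                 ⟨mul_nonneg hs.1.le hv.1, le_trans (mul_le_of_le_one_left hv.1 hs.2.le) hv.2⟩⟩
      have hEt : Tendsto (fun s : ℝ => ε * Real.exp ((M+1)*(s*u+s*v))) (nhdsWithin 1 (Iio 1))
          (nhds (ε * Real.exp ((M+1)*(u+v)))) := by
        have hcont : Continuous fun s : ℝ => ε * Real.exp ((M+1)*(s*u+s*v)) :=
          continuous_const.mul (Real.continuous_exp.comp (continuous_const.mul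
            ((continuous_id.mul continuous_const).add (continuous_id.mul continuous_const))))
        have := (hcont.tendsto 1).mono_left (nhdsWithin_le_nhds (s := Iio (1:ℝ)))
        simpa using this
      have hev := Ioo_mem_nhdsLT_of_mem (show (1:ℝ) ∈ Ioc (0:ℝ) 1 by constructor <;> norm_num)
      constructor
      · have hθt : Tendsto (fun s : ℝ => θ (s*u) (s*v) + ε * Real.exp ((M+1)*(s*u+s*v)))
            (nhdsWithin 1 (Iio 1)) (nhds (θ u v + ε * Real.exp ((M+1)*(u+v)))) :=
          (Filter.Tendsto.comp (hθc.continuousWithinAt hmem) hpath).add hEt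
        exact ge_of_tendsto hθt (by
          filter_upwards [hev] with s hs
          exact (key s ⟨hs.1.le, hs.2⟩).1)
      · have hζt : Tendsto (fun s : ℝ => ζ (s*u) (s*v) + ε * Real.exp ((M+1)*(s*u+s*v)))
            (nhdsWithin 1 (Iio 1)) (nhds (ζ u v + ε * Real.exp ((M+1)*(u+v)))) :=
          (Filter.Tendsto.comp (hζc.continuousWithinAt hmem) hpath).add hEt
        exact ge_of_tendsto hζt (by
          filter_upwards [hev] with s hs
          exact (key s ⟨hs.1.le, hs.2⟩).2)
    -- strict positivity on the good region
    have claim1 : ∀ u ∈ Icc (0:ℝ) U, ∀ v ∈ Icc (0:ℝ) V, u + v ≤ T →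
        ε ≤ θ u v + ε * Real.exp ((M+1)*(u+v)) ∧
        ε ≤ ζ u v + ε * Real.exp ((M+1)*(u+v)) := by
      intro u hu v hv hsum
      constructor
      · -- monotone in u on [0,u]
        have hsub : Icc (0:ℝ) u ⊆ Icc (0:ℝ) U := Icc_subset_Icc le_rfl hu.2
        have hmono : MonotoneOn (fun x => θ x v + ε * Real.exp ((M+1)*(x+v))) (Icc 0 u) := by
          apply monotoneOn_of_hasDerivWithinAt_nonneg (convex_Icc 0 u)
            (f' := fun x => ζ x v * a x v + ε * (Real.exp ((M+1)*(x+v)) * ((M+1)*1)))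
          · intro x hx
            exact ((hθu x (hsub hx) v hv).continuousWithinAt.mono hsub).add
              (hEd (M+1) v ε x).continuousAt.continuousWithinAt
          · intro x hx
            rw [interior_Icc] at hx ⊢
            have hxU : x ∈ Icc (0:ℝ) U := ⟨hx.1.le, hx.2.le.trans hu.2⟩
            exact ((hθu x hxU v hv).mono (fun y hy => hsub ⟨hy.1.le, hy.2.le⟩)).add
              (hEd (M+1) v ε x).hasDerivWithinAt
          · intro x hx
            rw [interior_Icc] at hx
            have hxU : x ∈ Icc (0:ℝ) U := ⟨hx.1.le, hx.2.le.trans hu.2⟩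
            have hxT : x + v ≤ T := by linarith [hx.2]
            have hζx := (hPT x hxU v hv hxT).2
            have he : (0:ℝ) < Real.exp ((M+1)*(x+v)) := Real.exp_pos _
            have haM := ha x hxU v hv
            have h1 : (-(ε * Real.exp ((M+1)*(x+v)))) * (a x v) ≤ ζ x v * a x v :=
              mul_le_mul_of_nonneg_right (by linarith) haM.1
            have h2 : (-(ε * Real.exp ((M+1)*(x+v)))) * M
                ≤ (-(ε * Real.exp ((M+1)*(x+v)))) * (a x v) :=
              mul_le_mul_of_nonpos_left haM.2 (by nlinarith)
            have h3 : 0 < ε * Real.exp ((M+1)*(x+v)) := by positivity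
            nlinarith
        have h0u : (0:ℝ) ∈ Icc (0:ℝ) u := ⟨le_rfl, hu.1⟩
        have huu : u ∈ Icc (0:ℝ) u := ⟨hu.1, le_rfl⟩
        have := hmono h0u huu hu.1
        have hexp1 : (1:ℝ) ≤ Real.exp ((M+1)*(0+v)) :=
          Real.one_le_exp (by nlinarith [hv.1])
        have hθ0v := hθ0 v hv
        simp only at this
        nlinarith [this]
      · -- monotone in v on [0,v]
        have hsub : Icc (0:ℝ) v ⊆ Icc (0:ℝ) V := Icc_subset_Icc le_rfl hv.2
        have hmono : MonotoneOn (fun y => ζ u y + ε * Real.exp ((M+1)*(u+y))) (Icc 0 v) := by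
          apply monotoneOn_of_hasDerivWithinAt_nonneg (convex_Icc 0 v)
            (f' := fun y => θ u y * b u y + ε * (Real.exp ((M+1)*(u+y)) * ((M+1)*1)))
          · intro y hy
            exact ((hζv u hu y (hsub hy)).continuousWithinAt.mono hsub).add
              (hEd' (M+1) u ε y).continuousAt.continuousWithinAt
          · intro y hy
            rw [interior_Icc] at hy ⊢
            have hyV : y ∈ Icc (0:ℝ) V := ⟨hy.1.le, hy.2.le.trans hv.2⟩
            exact ((hζv u hu y hyV).mono (fun z hz => hsub ⟨hz.1.le, hz.2.le⟩)).add
              (hEd' (M+1) u ε y).hasDerivWithinAt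
          · intro y hy
            rw [interior_Icc] at hy
            have hyV : y ∈ Icc (0:ℝ) V := ⟨hy.1.le, hy.2.le.trans hv.2⟩
            have hyT : u + y ≤ T := by linarith [hy.2]
            have hθy := (hPT u hu y hyV hyT).1
            have he : (0:ℝ) < Real.exp ((M+1)*(u+y)) := Real.exp_pos _
            have hbM := hb u hu y hyV
            have h1 : (-(ε * Real.exp ((M+1)*(u+y)))) * (b u y) ≤ θ u y * b u y :=
              mul_le_mul_of_nonneg_right (by linarith) hbM.1
            have h2 : (-(ε * Real.exp ((M+1)*(u+y)))) * M
                ≤ (-(ε * Real.exp ((M+1)*(u+y)))) * (b u y) :=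
              mul_le_mul_of_nonpos_left hbM.2 (by nlinarith)
            have h3 : 0 < ε * Real.exp ((M+1)*(u+y)) := by positivity
            nlinarith
        have h0v : (0:ℝ) ∈ Icc (0:ℝ) v := ⟨le_rfl, hv.1⟩
        have hvv : v ∈ Icc (0:ℝ) v := ⟨hv.1, le_rfl⟩
        have := hmono h0v hvv hv.1
        have hexp1 : (1:ℝ) ≤ Real.exp ((M+1)*(u+0)) :=
          Real.one_le_exp (by nlinarith [hu.1])
        have hζu0 := hζ0 u hu
        simp only at this
        nlinarith [this]
    -- T must equal U+V
    have hTeq : T = U + V := by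
      by_contra hne
      have hT : T < U + V := lt_of_le_of_ne hTle hne
      -- uniform continuity of the perturbed fields on the compact rectangle
      have hcomp : IsCompact (Icc (0:ℝ) U ×ˢ Icc (0:ℝ) V) :=
        isCompact_Icc.prod isCompact_Icc
      have hEc : Continuous fun p : ℝ × ℝ => ε * Real.exp ((M+1)*(p.1+p.2)) :=
        continuous_const.mul (Real.continuous_exp.comp
          (continuous_const.mul (continuous_fst.add continuous_snd)))
      have hfθ : ContinuousOn (fun p : ℝ × ℝ => θ p.1 p.2 + ε * Real.exp ((M+1)*(p.1+p.2)))
          (Icc (0:ℝ) U ×ˢ Icc (0:ℝ) V) := hθc.add hEc.continuousOn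
      have hfζ : ContinuousOn (fun p : ℝ × ℝ => ζ p.1 p.2 + ε * Real.exp ((M+1)*(p.1+p.2)))
          (Icc (0:ℝ) U ×ˢ Icc (0:ℝ) V) := hζc.add hEc.continuousOn
      have hucθ := hcomp.uniformContinuousOn_of_continuous hfθ
      have hucζ := hcomp.uniformContinuousOn_of_continuous hfζ
      rw [Metric.uniformContinuousOn_iff] at hucθ hucζ
      obtain ⟨δ₁, hδ₁, hδ₁'⟩ := hucθ ε hε
      obtain ⟨δ₂, hδ₂, hδ₂'⟩ := hucζ ε hε
      set δ : ℝ := min δ₁ δ₂ with hδdef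
      have hδ : 0 < δ := lt_min hδ₁ hδ₂
      set t' : ℝ := min (T + δ/2) (U + V) with ht'def
      have ht'T : T < t' := lt_min (by linarith) hT
      have ht'S : t' ∈ S := by
        refine ⟨by positivity, min_le_right _ _, ?_⟩
        intro u hu v hv hsum
        by_cases hcase : u + v ≤ T
        · exact hPT u hu v hv hcase
        · push_neg at hcase
          have hc0 : 0 < u + v := lt_of_le_of_lt hT0 hcase
          set s : ℝ := T / (u + v) with hsdef
          have hs0 : 0 ≤ s := div_nonneg hT0 hc0.le
          have hs1 : s < 1 := (div_lt_one hc0).mpr hcase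
          have hsT : s * (u + v) = T := div_mul_cancel₀ T hc0.ne'
          have hsu : s*u ∈ Icc (0:ℝ) U :=
            ⟨mul_nonneg hs0 hu.1, le_trans (mul_le_of_le_one_left hu.1 hs1.le) hu.2⟩
          have hsv : s*v ∈ Icc (0:ℝ) V :=
            ⟨mul_nonneg hs0 hv.1, le_trans (mul_le_of_le_one_left hv.1 hs1.le) hv.2⟩
          have hqT : s*u + s*v ≤ T := by rw [← mul_add, hsT]
          have hT' : T = s*u + s*v := by rw [← hsT]; ring
          have hsu' : s*u ≤ u := mul_le_of_le_one_left hu.1 hs1.le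
          have hsv' : s*v ≤ v := mul_le_of_le_one_left hv.1 hs1.le
          have hclose : dist ((u,v) : ℝ × ℝ) ((s*u, s*v) : ℝ × ℝ) < δ := by
            have hdu : dist u (s*u) ≤ (u + v) - T := by
              rw [Real.dist_eq, abs_of_nonneg (by linarith)]
              linarith
            have hdv : dist v (s*v) ≤ (u + v) - T := by
              rw [Real.dist_eq, abs_of_nonneg (by linarith)]
              linarith
            have hsum' : u + v ≤ T + δ/2 := le_trans hsum (min_le_left _ _)
            rw [Prod.dist_eq]
            have : (u + v) - T < δ := by linarith
            exact lt_of_le_of_lt (max_le hdu hdv) (lt_of_le_of_lt (by linarith) this)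
          have hmem1 : ((u,v) : ℝ × ℝ) ∈ Icc (0:ℝ) U ×ˢ Icc (0:ℝ) V := ⟨hu, hv⟩
          have hmem2 : ((s*u, s*v) : ℝ × ℝ) ∈ Icc (0:ℝ) U ×ˢ Icc (0:ℝ) V := ⟨hsu, hsv⟩
          have hclaim := claim1 (s*u) hsu (s*v) hsv hqT
          constructor
          · have hd := hδ₁' _ hmem1 _ hmem2 (lt_of_lt_of_le hclose (min_le_left _ _))
            rw [Real.dist_eq, abs_lt] at hd
            have := hclaim.1
            simp only at hd this ⊢
            linarith [hd.1, hd.2]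
          · have hd := hδ₂' _ hmem1 _ hmem2 (lt_of_lt_of_le hclose (min_le_right _ _))
            rw [Real.dist_eq, abs_lt] at hd
            have := hclaim.2
            simp only at hd this ⊢
            linarith [hd.1, hd.2]
      exact absurd (le_csSup hSbdd ht'S) (not_le.mpr ht'T)
    intro u hu v hv
    exact hPT u hu v hv (by rw [hTeq]; linarith [hu.2, hv.2])
  intro u hu v hv
  constructor
  · by_contra h
    push_neg at h
    have he : (0:ℝ) < Real.exp ((M+1)*(u+v)) := Real.exp_pos _
    have := (main (-θ u v / (2 * Real.exp ((M+1)*(u+v))))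
      (div_pos (by linarith) (by positivity)) u hu v hv).1
    have heq : -θ u v / (2 * Real.exp ((M+1)*(u+v))) * Real.exp ((M+1)*(u+v))
        = -θ u v / 2 := by field_simp
    rw [heq] at this
    linarith
  · by_contra h
    push_neg at h
    have he : (0:ℝ) < Real.exp ((M+1)*(u+v)) := Real.exp_pos _
    have := (main (-ζ u v / (2 * Real.exp ((M+1)*(u+v))))
      (div_pos (by linarith) (by positivity)) u hu v hv).2
    have heq : -ζ u v / (2 * Real.exp ((M+1)*(u+v))) * Real.exp ((M+1)*(u+v))
        = -ζ u v / 2 := by field_simp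
    rw [heq] at this
    linarith



/-- The monotonicity peculiar to trapped regions: for the characteristic form of
the wave equation `∂_u θ = −ζλ/r`, `∂_v ζ = −θν/r` on the rectangle
`[0,U] × [0,V]`, with `r > 0`, `λ ≤ 0`, `ν ≤ 0`, nonnegativity of `θ` on the
initial segment `u = 0` and of `ζ` on the initial segment `v = 0` is preserved:
`θ ≥ 0` and `ζ ≥ 0` everywhere; consequently `∂_u θ ≥ 0` and `∂_v ζ ≥ 0`
everywhere, i.e. `θ` is non-decreasing in `u` and `ζ` is non-decreasing
in `v`. -/
theorem stmt2 (U V : ℝ) (hU : 0 < U) (hV : 0 < V)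
    (θ ζ lam ν r : ℝ → ℝ → ℝ)
    (hθc : ContinuousOn (fun p : ℝ × ℝ => θ p.1 p.2) (Set.Icc 0 U ×ˢ Set.Icc 0 V))
    (hζc : ContinuousOn (fun p : ℝ × ℝ => ζ p.1 p.2) (Set.Icc 0 U ×ˢ Set.Icc 0 V))
    (hlamc : ContinuousOn (fun p : ℝ × ℝ => lam p.1 p.2) (Set.Icc 0 U ×ˢ Set.Icc 0 V))
    (hνc : ContinuousOn (fun p : ℝ × ℝ => ν p.1 p.2) (Set.Icc 0 U ×ˢ Set.Icc 0 V))
    (hrc : ContinuousOn (fun p : ℝ × ℝ => r p.1 p.2) (Set.Icc 0 U ×ˢ Set.Icc 0 V))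
    (hr : ∀ u ∈ Set.Icc (0:ℝ) U, ∀ v ∈ Set.Icc (0:ℝ) V, 0 < r u v)
    (hlam : ∀ u ∈ Set.Icc (0:ℝ) U, ∀ v ∈ Set.Icc (0:ℝ) V, lam u v ≤ 0)
    (hν : ∀ u ∈ Set.Icc (0:ℝ) U, ∀ v ∈ Set.Icc (0:ℝ) V, ν u v ≤ 0)
    (hθu : ∀ u ∈ Set.Icc (0:ℝ) U, ∀ v ∈ Set.Icc (0:ℝ) V,
      HasDerivWithinAt (fun u' => θ u' v) (-(ζ u v * lam u v) / r u v)
        (Set.Icc 0 U) u)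
    (hζv : ∀ u ∈ Set.Icc (0:ℝ) U, ∀ v ∈ Set.Icc (0:ℝ) V,
      HasDerivWithinAt (fun v' => ζ u v') (-(θ u v * ν u v) / r u v)
        (Set.Icc 0 V) v)
    (hθ0 : ∀ v ∈ Set.Icc (0:ℝ) V, 0 ≤ θ 0 v)
    (hζ0 : ∀ u ∈ Set.Icc (0:ℝ) U, 0 ≤ ζ u 0) :
    (∀ u ∈ Set.Icc (0:ℝ) U, ∀ v ∈ Set.Icc (0:ℝ) V,
      0 ≤ θ u v ∧ 0 ≤ ζ u v ∧
      0 ≤ -(ζ u v * lam u v) / r u v ∧ 0 ≤ -(θ u v * ν u v) / r u v) ∧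
    (∀ v ∈ Set.Icc (0:ℝ) V, MonotoneOn (fun u => θ u v) (Set.Icc 0 U)) ∧
    (∀ u ∈ Set.Icc (0:ℝ) U, MonotoneOn (fun v => ζ u v) (Set.Icc 0 V)) := by
  
  have hcomp : IsCompact (Set.Icc (0:ℝ) U ×ˢ Set.Icc (0:ℝ) V) :=
    isCompact_Icc.prod isCompact_Icc
  have hrne : ∀ p ∈ Set.Icc (0:ℝ) U ×ˢ Set.Icc (0:ℝ) V, r p.1 p.2 ≠ 0 :=
    fun p hp => (hr p.1 hp.1 p.2 hp.2).ne'
  have hac : ContinuousOn (fun p : ℝ × ℝ => -lam p.1 p.2 / r p.1 p.2)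
      (Set.Icc 0 U ×ˢ Set.Icc 0 V) := hlamc.neg.div hrc hrne
  have hbc : ContinuousOn (fun p : ℝ × ℝ => -ν p.1 p.2 / r p.1 p.2)
      (Set.Icc 0 U ×ˢ Set.Icc 0 V) := hνc.neg.div hrc hrne
  obtain ⟨Ca, hCa⟩ := hcomp.exists_bound_of_continuousOn hac
  obtain ⟨Cb, hCb⟩ := hcomp.exists_bound_of_continuousOn hbc
  set M : ℝ := max (max Ca Cb) 0 with hMdef
  have hM : 0 ≤ M := le_max_right _ _
  have ha : ∀ u ∈ Set.Icc (0:ℝ) U, ∀ v ∈ Set.Icc (0:ℝ) V,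
      (-lam u v / r u v) ∈ Set.Icc (0:ℝ) M := by
    intro u hu v hv
    refine ⟨div_nonneg (neg_nonneg.mpr (hlam u hu v hv)) (hr u hu v hv).le, ?_⟩
    have := hCa (u, v) ⟨hu, hv⟩
    rw [Real.norm_eq_abs] at this
    calc -lam u v / r u v ≤ |(-lam u v / r u v)| := le_abs_self _
      _ ≤ Ca := this
      _ ≤ M := le_trans (le_max_left _ _) (le_max_left _ _)
  have hb : ∀ u ∈ Set.Icc (0:ℝ) U, ∀ v ∈ Set.Icc (0:ℝ) V,
      (-ν u v / r u v) ∈ Set.Icc (0:ℝ) M := by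
    intro u hu v hv
    refine ⟨div_nonneg (neg_nonneg.mpr (hν u hu v hv)) (hr u hu v hv).le, ?_⟩
    have := hCb (u, v) ⟨hu, hv⟩
    rw [Real.norm_eq_abs] at this
    calc -ν u v / r u v ≤ |(-ν u v / r u v)| := le_abs_self _
      _ ≤ Cb := this
      _ ≤ M := le_trans (le_max_right _ _) (le_max_left _ _)
  have hnonneg := bootstrap U V M hU hV hM θ ζ
    (fun u v => -lam u v / r u v) (fun u v => -ν u v / r u v) hθc hζc ha hb
    (fun u hu v hv => by
      have := hθu u hu v hv
      rwa [show -(ζ u v * lam u v) / r u v = ζ u v * (-lam u v / r u v) from by ring] at this)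
    (fun u hu v hv => by
      have := hζv u hu v hv
      rwa [show -(θ u v * ν u v) / r u v = θ u v * (-ν u v / r u v) from by ring] at this)
    hθ0 hζ0
  have hder1 : ∀ u ∈ Set.Icc (0:ℝ) U, ∀ v ∈ Set.Icc (0:ℝ) V,
      0 ≤ -(ζ u v * lam u v) / r u v := by
    intro u hu v hv
    have h1 := (hnonneg u hu v hv).2
    have h2 := hlam u hu v hv
    exact div_nonneg (by nlinarith) (hr u hu v hv).le
  have hder2 : ∀ u ∈ Set.Icc (0:ℝ) U, ∀ v ∈ Set.Icc (0:ℝ) V,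
      0 ≤ -(θ u v * ν u v) / r u v := by
    intro u hu v hv
    have h1 := (hnonneg u hu v hv).1
    have h2 := hν u hu v hv
    exact div_nonneg (by nlinarith) (hr u hu v hv).le
  refine ⟨fun u hu v hv => ⟨(hnonneg u hu v hv).1, (hnonneg u hu v hv).2,
    hder1 u hu v hv, hder2 u hu v hv⟩, ?_, ?_⟩
  · intro v hv
    apply monotoneOn_of_hasDerivWithinAt_nonneg (convex_Icc 0 U)
      (f' := fun x => -(ζ x v * lam x v) / r x v)
    · exact fun x hx => (hθu x hx v hv).continuousWithinAt
    · intro x hx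
      exact (hθu x (interior_subset hx) v hv).mono interior_subset
    · intro x hx
      exact hder1 x (interior_subset hx) v hv
  · intro u hu
    apply monotoneOn_of_hasDerivWithinAt_nonneg (convex_Icc 0 V)
      (f' := fun y => -(θ u y * ν u y) / r u y)
    · exact fun y hy => (hζv u hu y hy).continuousWithinAt
    · intro y hy
      exact (hζv u hu y (interior_subset hy)).mono interior_subset
    · intro y hy
      exact hder2 u hu y (interior_subset hy)
end

section
/- Let U > 0, V ∈ ℝ, ε > 0, m₀ ∈ ℝ, and let w : (0,U] × [0,V) → ℝ satisfy: (i) for each fixed u, the function v ↦ w(u,v) is non-decreasing on [0,V); (ii) for all 0 < u ≤ u' ≤ U and 0 ≤ v ≤ v' < V, w(u',v') − w(u',v) ≥ w(u,v') − w(u,v). Suppose there is a function γ : (0,U] → [0,V) with γ(u) → V as u → 0⁺ and w(u, γ(u)) → m₀ as u → 0⁺, and suppose that for every u ∈ (0,U], sup_{v ∈ [0,V)} w(u,v) ≥ m₀ + 2ε. Then for every u₀ ∈ (0,U], w(u₀, v) → ∞ as v → V⁻; that is, w blows up identically on the boundary v = V. -/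
/-- The concluding argument in the proof of mass inflation.
Let `w : (0,U] × [0,V) → ℝ` be non-decreasing in `v` for each fixed `u` and
satisfy the superadditivity inequality (monot).  Suppose `γ : (0,U] → [0,V)`
(the future boundary of the stable blue-shift region) satisfies `γ(u) → V`
and `w(u,γ(u)) → m₀` as `u → 0⁺`, and that for every `u ∈ (0,U]` one has
`sup_{v ∈ [0,V)} w(u,v) ≥ m₀ + 2ε` (assumption (assume), a quantitative
difference from Reissner–Nordström).  Then for every `u₀ ∈ (0,U]`,
`w(u₀,v) → ∞` as `v → V⁻`: the mass blows up identically on the boundary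
`v = V`. -/
theorem stmt6 (U V ε m₀ : ℝ) (hU : 0 < U) (hV : 0 < V) (hε : 0 < ε)
    (w : ℝ → ℝ → ℝ)
    (hmono : ∀ u ∈ Set.Ioc (0:ℝ) U, MonotoneOn (w u) (Set.Ico 0 V))
    (hsuper : ∀ u u' v v' : ℝ, 0 < u → u ≤ u' → u' ≤ U →
      0 ≤ v → v ≤ v' → v' < V → w u v' - w u v ≤ w u' v' - w u' v)
    (γ : ℝ → ℝ)
    (hγmem : ∀ u ∈ Set.Ioc (0:ℝ) U, γ u ∈ Set.Ico (0:ℝ) V)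
    (hγlim : Filter.Tendsto γ (nhdsWithin 0 (Set.Ioi 0)) (nhds V))
    (hwγlim : Filter.Tendsto (fun u => w u (γ u)) (nhdsWithin 0 (Set.Ioi 0))
      (nhds m₀))
    (hsup : ∀ u ∈ Set.Ioc (0:ℝ) U,
      ((m₀ + 2 * ε : ℝ) : EReal) ≤ ⨆ v ∈ Set.Ico (0:ℝ) V, ((w u v : ℝ) : EReal)) :
    ∀ u₀ ∈ Set.Ioc (0:ℝ) U,
      Filter.Tendsto (fun v => w u₀ v) (nhdsWithin V (Set.Iio V))
        Filter.atTop := by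
  intro u₀ hu₀
  have key : ∀ b : ℝ, ∃ v ∈ Set.Ico (0:ℝ) V, b ≤ w u₀ v := by
    by_contra h
    push_neg at h
    obtain ⟨b, hb⟩ := h
    set s := w u₀ '' Set.Ico 0 V with hs
    have hne : s.Nonempty := ⟨w u₀ 0, ⟨0, ⟨le_refl 0, hV⟩, rfl⟩⟩
    have hbdd : BddAbove s := ⟨b, by rintro x ⟨v, hv, rfl⟩; exact (hb v hv).le⟩
    set L := sSup s with hL
    obtain ⟨x, hxs, hx⟩ := exists_lt_of_lt_csSup hne
      (show L - ε/2 < L by linarith)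
    obtain ⟨v₀, hv₀, rfl⟩ := hxs
    -- choose a small u
    have e1 : ∀ᶠ u in nhdsWithin (0:ℝ) (Set.Ioi 0), u ∈ Set.Ioi (0:ℝ) :=
      self_mem_nhdsWithin
    have e2 : ∀ᶠ u in nhdsWithin (0:ℝ) (Set.Ioi 0), u < u₀ :=
      mem_nhdsWithin_of_mem_nhds (Iio_mem_nhds hu₀.1)
    have e3 : ∀ᶠ u in nhdsWithin (0:ℝ) (Set.Ioi 0), v₀ < γ u :=
      hγlim.eventually (lt_mem_nhds hv₀.2)
    have e4 : ∀ᶠ u in nhdsWithin (0:ℝ) (Set.Ioi 0), w u (γ u) < m₀ + ε/2 :=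
      hwγlim.eventually (Iio_mem_nhds (show m₀ < m₀ + ε/2 by linarith))
    obtain ⟨u, ⟨⟨hu_pos, hu_lt⟩, hγu⟩, hu4⟩ := (((e1.and e2).and e3).and e4).exists
    have huU : u ∈ Set.Ioc (0:ℝ) U := ⟨hu_pos, hu_lt.le.trans hu₀.2⟩
    -- get v'' with large mass for u
    have hlt : ((m₀ + ε : ℝ) : EReal) < ⨆ v ∈ Set.Ico (0:ℝ) V, ((w u v : ℝ) : EReal) :=
      lt_of_lt_of_le (EReal.coe_lt_coe_iff.mpr (by linarith)) (hsup u huU)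
    rw [lt_iSup_iff] at hlt
    obtain ⟨v'', hv''⟩ := hlt
    rw [lt_iSup_iff] at hv''
    obtain ⟨hv''mem, hv''lt⟩ := hv''
    have hwv'' : m₀ + ε < w u v'' := EReal.coe_lt_coe_iff.mp hv''lt
    have hγmemu := hγmem u huU
    set v' := max v'' (γ u) with hv'
    have hv'mem : v' ∈ Set.Ico (0:ℝ) V :=
      ⟨le_trans hv''mem.1 (le_max_left _ _), max_lt hv''mem.2 hγmemu.2⟩
    have hwuv' : m₀ + ε < w u v' :=
      lt_of_lt_of_le hwv'' (hmono u huU hv''mem hv'mem (le_max_left _ _))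
    have hdiff : ε/2 < w u v' - w u (γ u) := by linarith
    have hss := hsuper u u₀ (γ u) v' hu_pos hu_lt.le hu₀.2 hγmemu.1
      (le_max_right _ _) hv'mem.2
    have hm1 : w u₀ v₀ ≤ w u₀ (γ u) :=
      hmono u₀ hu₀ hv₀ hγmemu hγu.le
    have hle : w u₀ v' ≤ L := le_csSup hbdd ⟨v', hv'mem, rfl⟩
    linarith
  rw [Filter.tendsto_atTop]
  intro b
  obtain ⟨v₁, hv₁, hb⟩ := key b
  filter_upwards [Ioo_mem_nhdsLT_of_mem ⟨hv₁.2, le_refl V⟩] with v hv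
  exact hb.trans (hmono u₀ hu₀ hv₁ ⟨le_trans hv₁.1 hv.1.le, hv.2⟩ hv.1.le)
end
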